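/- Let u, v : [t0,θ] → ℝ^m be measurable controls with ∫_{t0}^{θ}‖u(t) - v(t)‖ dt ≤ η, and suppose x, y are absolutely continuous solutions of ẋ = f(t,x,u), ẏ = f(t,y,v) with x(t0) = y(t0) = x0, where f satisfies ‖f(t,x1,u1) - f(t,x2,u2)‖ ≤ [γ1 + γ2(‖u1‖+‖u2‖)]‖x1 - x2‖ + γ3‖u1 - u2‖, and ∫_{t0}^{θ}(‖u‖+‖v‖) ≤ 2rl*. Then ‖x(t) - y(t)‖ ≤ γ3 η · exp(γ1(θ-t0) + 2γ2 r l*) for every t ∈ [t0,θ]. -/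

import Mathlib

open MeasureTheory Set intervalIntegral

lemma gronwall_cont (t0 θ c : ℝ) (hc : 0 ≤ c) (w g : ℝ → ℝ)
    (hw : Continuous w) (hg : Continuous g) (hw0 : ∀ t, 0 ≤ w t)
    (H : ∀ t ∈ Icc t0 θ, g t ≤ c + ∫ s in t0..t, w s * g s) :
    ∀ t ∈ Icc t0 θ, g t ≤ c * Real.exp (∫ s in t0..t, w s) := by
  intro t htI
  set h : ℝ → ℝ := fun t => c + ∫ s in t0..t, w s * g s with hh
  set W : ℝ → ℝ := fun t => ∫ s in t0..t, w s with hW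
  have hwg : Continuous fun s => w s * g s := hw.mul hg
  have hder : ∀ b : ℝ, HasDerivAt h (w b * g b) b := by
    intro b
    have := integral_hasDerivAt_right (f := fun s => w s * g s)
      (hwg.intervalIntegrable t0 b)
      (hwg.stronglyMeasurableAtFilter _ _) hwg.continuousAt
    have h2 := (hasDerivAt_const b c).add this; rw [zero_add] at h2; exact h2
  have hWder : ∀ b : ℝ, HasDerivAt W (w b) b := fun b =>
    integral_hasDerivAt_right (hw.intervalIntegrable t0 b)
      (hw.stronglyMeasurableAtFilter _ _) hw.continuousAt
  set φ : ℝ → ℝ := fun t => h t * Real.exp (-W t) with hφ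
  have hφder : ∀ b : ℝ, HasDerivAt φ
      ((w b * g b - w b * h b) * Real.exp (-W b)) b := by
    intro b
    have h1 : HasDerivAt (fun t => Real.exp (-W t)) (-w b * Real.exp (-W b)) b := by
      have := ((hWder b).neg).exp
      simp only [Pi.neg_apply] at this; rw [mul_comm] at this; exact this
    have := (hder b).mul h1
    rw [show ((w b * g b - w b * h b) * Real.exp (-W b)) = w b * g b * Real.exp (-W b) + h b * (-w b * Real.exp (-W b)) by ring]
    exact this
  have hanti : AntitoneOn φ (Icc t0 θ) := by
    apply antitoneOn_of_deriv_nonpos (convex_Icc t0 θ)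
      (fun b _ => ((hφder b).continuousAt).continuousWithinAt)
      (fun b _ => ((hφder b).differentiableAt).differentiableWithinAt)
    intro b hb
    rw [interior_Icc] at hb
    rw [(hφder b).deriv]
    have hgh : g b ≤ h b := H b ⟨hb.1.le, hb.2.le⟩
    have : w b * g b - w b * h b ≤ 0 := by nlinarith [hw0 b]
    exact mul_nonpos_of_nonpos_of_nonneg this (Real.exp_pos _).le
  have hφt0 : φ t0 = c := by simp [hφ, hh, hW]
  have hφle : φ t ≤ c := hφt0 ▸ hanti (left_mem_Icc.2 (htI.1.trans htI.2)) htI htI.1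
  have hgt : g t ≤ h t := H t htI
  have heq : h t = φ t * Real.exp (W t) := by
    rw [hφ]; simp [mul_assoc, ← Real.exp_add]
  calc g t ≤ h t := hgt
    _ = φ t * Real.exp (W t) := heq
    _ ≤ c * Real.exp (W t) := mul_le_mul_of_nonneg_right hφle (Real.exp_pos _).le

theorem stmt_13 {n m : ℕ} (t0 θ γ1 γ2 γ3 r l η α : ℝ) (ht : t0 < θ)
    (hγ1 : 0 < γ1) (hγ2 : 0 < γ2) (hγ3 : 0 < γ3) (hr : 0 < r) (hl : 0 < l)
    (hη : 0 ≤ η) (hα : 0 < α)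
    (f : ℝ → EuclideanSpace ℝ (Fin n) → EuclideanSpace ℝ (Fin m) → EuclideanSpace ℝ (Fin n))
    (x y : ℝ → EuclideanSpace ℝ (Fin n)) (u v : ℝ → EuclideanSpace ℝ (Fin m))
    (x0 : EuclideanSpace ℝ (Fin n))
    (hu_meas : Measurable u) (hv_meas : Measurable v)
    (hf : ∀ t ∈ Set.Icc t0 θ, ∀ x1 x2 : EuclideanSpace ℝ (Fin n),
      ∀ u1 u2 : EuclideanSpace ℝ (Fin m), ‖x1‖ ≤ α → ‖x2‖ ≤ α →
      ‖f t x1 u1 - f t x2 u2‖ ≤ (γ1 + γ2 * (‖u1‖ + ‖u2‖)) * ‖x1 - x2‖ + γ3 * ‖u1 - u2‖)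
    (hxb : ∀ t ∈ Set.Icc t0 θ, ‖x t‖ ≤ α)
    (hyb : ∀ t ∈ Set.Icc t0 θ, ‖y t‖ ≤ α)
    (hx : ∀ t ∈ Set.Icc t0 θ, x t = x0 + ∫ s in t0..t, f s (x s) (u s))
    (hy : ∀ t ∈ Set.Icc t0 θ, y t = x0 + ∫ s in t0..t, f s (y s) (v s))
    (hxint : IntervalIntegrable (fun s => f s (x s) (u s)) volume t0 θ)
    (hyint : IntervalIntegrable (fun s => f s (y s) (v s)) volume t0 θ)
    (huvint : IntervalIntegrable (fun s => ‖u s - v s‖) volume t0 θ)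
    (hsumint : IntervalIntegrable (fun s => ‖u s‖ + ‖v s‖) volume t0 θ)
    (huv : (∫ t in t0..θ, ‖u t - v t‖) ≤ η)
    (hsum : (∫ t in t0..θ, (‖u t‖ + ‖v t‖)) ≤ 2 * r * l) :
    ∀ t ∈ Set.Icc t0 θ,
      ‖x t - y t‖ ≤ γ3 * η * Real.exp (γ1 * (θ - t0) + 2 * γ2 * r * l) := by
  have ht' : t0 ≤ θ := ht.le
  set a : ℝ → ℝ := fun s => γ1 + γ2 * (‖u s‖ + ‖v s‖) with ha
  have haint : IntervalIntegrable a volume t0 θ :=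
    (_root_.intervalIntegrable_const).add (hsumint.const_mul γ2)
  have ha0 : ∀ s, 0 ≤ a s := fun s => by
    have : 0 ≤ ‖u s‖ + ‖v s‖ := by positivity
    simp only [ha]; nlinarith
  set d : ℝ → EuclideanSpace ℝ (Fin n) :=
    fun s => f s (x s) (u s) - f s (y s) (v s) with hd
  have hdint : IntervalIntegrable d volume t0 θ := hxint.sub hyint
  set P : ℝ → EuclideanSpace ℝ (Fin n) := fun t => ∫ s in t0..t, d s with hP
  have hPxy : ∀ t ∈ Icc t0 θ, x t - y t = P t := by
    intro t htI
    have hxi : IntervalIntegrable (fun s => f s (x s) (u s)) volume t0 t :=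
      hxint.mono_set (by rw [uIcc_of_le ht', uIcc_of_le htI.1]; exact Icc_subset_Icc le_rfl htI.2)
    have hyi : IntervalIntegrable (fun s => f s (y s) (v s)) volume t0 t :=
      hyint.mono_set (by rw [uIcc_of_le ht', uIcc_of_le htI.1]; exact Icc_subset_Icc le_rfl htI.2)
    rw [hx t htI, hy t htI, hP]
    simp only [hd]
    rw [integral_sub hxi hyi]
    abel
  have hPcont : ContinuousOn P (Icc t0 θ) := by
    have := continuousOn_primitive_interval' (μ := volume) (f := d) hdint
      (by rw [uIcc_of_le ht']; exact ⟨le_rfl, ht'⟩)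
    rwa [uIcc_of_le ht'] at this
  -- clamp
  set cl : ℝ → ℝ := fun t => max t0 (min t θ) with hcl
  have hclcont : Continuous cl := continuous_const.max (continuous_id.min continuous_const)
  have hclmem : ∀ t, cl t ∈ Icc t0 θ := fun t =>
    ⟨le_max_left _ _, max_le ht' (min_le_right _ _)⟩
  have hclid : ∀ t ∈ Icc t0 θ, cl t = t := by
    intro t htI
    simp [hcl, min_eq_left htI.2, max_eq_right htI.1]
  set G : ℝ → ℝ := fun t => ‖P (cl t)‖ with hG
  have hGcont : Continuous G :=
    (hPcont.comp_continuous hclcont hclmem).norm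
  have hGxy : ∀ t ∈ Icc t0 θ, G t = ‖x t - y t‖ := by
    intro t htI
    rw [hG]; simp only [hclid t htI, hPxy t htI]
  have hG0 : ∀ t, 0 ≤ G t := fun t => norm_nonneg _
  have hGb : ∀ t, G t ≤ 2 * α := by
    intro t
    have h1 : G t = ‖x (cl t) - y (cl t)‖ := by
      simp only [hG]; rw [← hPxy (cl t) (hclmem t)]
    rw [h1]
    calc ‖x (cl t) - y (cl t)‖ ≤ ‖x (cl t)‖ + ‖y (cl t)‖ := norm_sub_le _ _
      _ ≤ 2 * α := by linarith [hxb _ (hclmem t), hyb _ (hclmem t)]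
  -- integrability of a * G on subintervals
  have haG : IntervalIntegrable (fun s => a s * G s) volume t0 θ :=
    haint.mul_continuousOn hGcont.continuousOn
  -- key inequality
  have key : ∀ t ∈ Icc t0 θ, G t ≤ γ3 * η + ∫ s in t0..t, a s * G s := by
    intro t htI
    have hsub : uIcc t0 t ⊆ uIcc t0 θ := by
      rw [uIcc_of_le ht', uIcc_of_le htI.1]; exact Icc_subset_Icc le_rfl htI.2
    have hdi : IntervalIntegrable d volume t0 t := hdint.mono_set hsub
    have h1 : G t = ‖P t‖ := by rw [hGxy t htI, hPxy t htI]
    have h2 : ‖P t‖ ≤ ∫ s in t0..t, ‖d s‖ :=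
      intervalIntegral.norm_integral_le_integral_norm htI.1
    have h3 : (∫ s in t0..t, ‖d s‖) ≤ ∫ s in t0..t, (a s * G s + γ3 * ‖u s - v s‖) := by
      apply integral_mono_on htI.1 hdi.norm
        ((haG.mono_set hsub).add ((huvint.const_mul γ3).mono_set hsub))
      intro s hs
      have hsI : s ∈ Icc t0 θ := ⟨hs.1, hs.2.trans htI.2⟩
      have := hf s hsI (x s) (y s) (u s) (v s) (hxb s hsI) (hyb s hsI)
      rw [hGxy s hsI]
      exact this
    have h4 : (∫ s in t0..t, (a s * G s + γ3 * ‖u s - v s‖))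
        = (∫ s in t0..t, a s * G s) + γ3 * ∫ s in t0..t, ‖u s - v s‖ := by
      rw [integral_add (haG.mono_set hsub) ((huvint.const_mul γ3).mono_set hsub),
        intervalIntegral.integral_const_mul]
    have h5 : (∫ s in t0..t, ‖u s - v s‖) ≤ ∫ s in t0..θ, ‖u s - v s‖ := by
      apply integral_mono_interval le_rfl htI.1 htI.2 _ huvint
      filter_upwards with s using norm_nonneg _
    have h6 : γ3 * (∫ s in t0..t, ‖u s - v s‖) ≤ γ3 * η :=
      mul_le_mul_of_nonneg_left (h5.trans huv) hγ3.le
    calc G t = ‖P t‖ := h1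
      _ ≤ ∫ s in t0..t, ‖d s‖ := h2
      _ ≤ _ := h3
      _ = _ := h4
      _ ≤ γ3 * η + ∫ s in t0..t, a s * G s := by linarith
  -- total a integral bound
  have haθ : (∫ s in t0..θ, a s) ≤ γ1 * (θ - t0) + 2 * γ2 * r * l := by
    have : (∫ s in t0..θ, a s)
        = γ1 * (θ - t0) + γ2 * ∫ s in t0..θ, (‖u s‖ + ‖v s‖) := by
      rw [ha]
      rw [integral_add (_root_.intervalIntegrable_const) (hsumint.const_mul γ2),
        intervalIntegral.integral_const_mul]
      simp [mul_comm]
    rw [this]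
    nlinarith [hsum]
  set C : ℝ := γ1 * (θ - t0) + 2 * γ2 * r * l with hC
  -- epsilon argument
  intro t htI
  rw [← hGxy t htI]
  have hmain : ∀ ε > (0:ℝ), G t ≤ (γ3 * η + 2 * α * ε) * Real.exp (C + ε) := by
    intro ε hε
    -- approximate a in L¹ by a continuous nonneg function
    have haInt : IntegrableOn a (Icc t0 θ) volume :=
      (intervalIntegrable_iff_integrableOn_Icc_of_le ht').mp haint
    have hFInt : Integrable (Set.indicator (Icc t0 θ) a) volume :=
      haInt.integrable_indicator measurableSet_Icc
    obtain ⟨w, -, hwL1, hwcont, hwint⟩ :=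
      hFInt.exists_hasCompactSupport_integral_sub_le hε
    set w' : ℝ → ℝ := fun s => max (w s) 0 with hw'
    have hw'cont : Continuous w' := hwcont.max continuous_const
    have hw'0 : ∀ s, 0 ≤ w' s := fun s => le_max_right _ _
    have hptw : ∀ s ∈ Icc t0 θ, |a s - w' s| ≤ ‖Set.indicator (Icc t0 θ) a s - w s‖ := by
      intro s hs
      have hws : w' s = max (w s) 0 := rfl
      rw [Set.indicator_of_mem hs, Real.norm_eq_abs, hws]
      rcases le_or_gt 0 (w s) with h | h
      · rw [max_eq_left h]
      · rw [max_eq_right h.le, sub_zero, abs_of_nonneg (ha0 s),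
          abs_of_nonneg (by linarith [ha0 s] : (0:ℝ) ≤ a s - w s)]
        linarith
    have hawint : IntervalIntegrable (fun s => |a s - w' s|) volume t0 θ :=
      (haint.sub (hw'cont.intervalIntegrable t0 θ)).abs
    have hL1' : (∫ s in t0..θ, |a s - w' s|) ≤ ε := by
      have h1 : (∫ s in t0..θ, |a s - w' s|)
          ≤ ∫ s in t0..θ, ‖Set.indicator (Icc t0 θ) a s - w s‖ := by
        apply integral_mono_on ht' hawint
          ((hFInt.sub hwint).norm.intervalIntegrable)
        exact hptw
      have h2 : (∫ s in t0..θ, ‖Set.indicator (Icc t0 θ) a s - w s‖)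
          ≤ ∫ s, ‖Set.indicator (Icc t0 θ) a s - w s‖ := by
        rw [integral_of_le ht']
        apply setIntegral_le_integral (hFInt.sub hwint).norm
        filter_upwards with s using norm_nonneg _
      linarith
    -- Gronwall hypothesis with w'
    have hG' : ∀ s ∈ Icc t0 θ, G s ≤ (γ3 * η + 2 * α * ε) + ∫ τ in t0..s, w' τ * G τ := by
      intro s hsI
      have hsub : uIcc t0 s ⊆ uIcc t0 θ := by
        rw [uIcc_of_le ht', uIcc_of_le hsI.1]; exact Icc_subset_Icc le_rfl hsI.2
      have hstep : (∫ τ in t0..s, a τ * G τ)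
          ≤ ∫ τ in t0..s, (w' τ * G τ + 2 * α * |a τ - w' τ|) := by
        apply integral_mono_on hsI.1 (haG.mono_set hsub)
          (((hw'cont.mul hGcont).intervalIntegrable t0 s).add
            ((hawint.const_mul (2*α)).mono_set hsub))
        intro τ _
        have h1 : a τ * G τ - w' τ * G τ = (a τ - w' τ) * G τ := by ring
        have h2 : (a τ - w' τ) * G τ ≤ |a τ - w' τ| * (2 * α) := by
          calc (a τ - w' τ) * G τ ≤ |a τ - w' τ| * G τ :=
              mul_le_mul_of_nonneg_right (le_abs_self _) (hG0 τ)
            _ ≤ |a τ - w' τ| * (2 * α) :=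
              mul_le_mul_of_nonneg_left (hGb τ) (abs_nonneg _)
        simp only [Pi.mul_apply]
        nlinarith
      have hsplit : (∫ τ in t0..s, (w' τ * G τ + 2 * α * |a τ - w' τ|))
          = (∫ τ in t0..s, w' τ * G τ) + 2 * α * ∫ τ in t0..s, |a τ - w' τ| := by
        rw [integral_add (f := fun τ => w' τ * G τ) ((hw'cont.mul hGcont).intervalIntegrable t0 s)
          ((hawint.const_mul (2*α)).mono_set hsub), intervalIntegral.integral_const_mul]
      have hεs : (∫ τ in t0..s, |a τ - w' τ|) ≤ ε := by
        refine le_trans ?_ hL1'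
        apply integral_mono_interval le_rfl hsI.1 hsI.2 _ hawint
        filter_upwards with τ using abs_nonneg _
      have := key s hsI
      have h2α : (0:ℝ) ≤ 2 * α := by linarith
      calc G s ≤ γ3 * η + ∫ τ in t0..s, a τ * G τ := this
        _ ≤ γ3 * η + ((∫ τ in t0..s, w' τ * G τ) + 2 * α * ε) := by
            have h' := hstep.trans_eq hsplit
            have h'' := mul_le_mul_of_nonneg_left hεs h2α
            linarith
        _ = (γ3 * η + 2 * α * ε) + ∫ τ in t0..s, w' τ * G τ := by ring
    have hc0 : (0:ℝ) ≤ γ3 * η + 2 * α * ε := by positivity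
    have hgron := gronwall_cont t0 θ _ hc0 w' G hw'cont hGcont hw'0 hG' t htI
    -- bound the exponent
    have hexp : (∫ τ in t0..t, w' τ) ≤ C + ε := by
      have h1 : (∫ τ in t0..t, w' τ) ≤ ∫ τ in t0..t, (a τ + |a τ - w' τ|) := by
        apply integral_mono_on htI.1 (hw'cont.intervalIntegrable t0 t)
          ((haint.add hawint).mono_set
            (by rw [uIcc_of_le ht', uIcc_of_le htI.1]; exact Icc_subset_Icc le_rfl htI.2))
        intro τ _
        have : w' τ - a τ ≤ |w' τ - a τ| := le_abs_self _
        rw [abs_sub_comm (a τ)] at *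
        linarith
      have h2 : (∫ τ in t0..t, (a τ + |a τ - w' τ|)) ≤ ∫ τ in t0..θ, (a τ + |a τ - w' τ|) := by
        apply integral_mono_interval le_rfl htI.1 htI.2 _ (haint.add hawint)
        filter_upwards with τ
        show (0:ℝ) ≤ a τ + |a τ - w' τ|
        have h1 := ha0 τ; have h2 := abs_nonneg (a τ - w' τ); linarith
      have h3 : (∫ τ in t0..θ, (a τ + |a τ - w' τ|))
          = (∫ τ in t0..θ, a τ) + ∫ τ in t0..θ, |a τ - w' τ| := integral_add haint hawint
      rw [hC]
      calc (∫ τ in t0..t, w' τ) ≤ _ := h1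
        _ ≤ _ := h2
        _ = _ := h3
        _ ≤ γ1 * (θ - t0) + 2 * γ2 * r * l + ε := by linarith [haθ, hL1']
    calc G t ≤ (γ3 * η + 2 * α * ε) * Real.exp (∫ τ in t0..t, w' τ) := hgron
      _ ≤ (γ3 * η + 2 * α * ε) * Real.exp (C + ε) :=
          mul_le_mul_of_nonneg_left (Real.exp_le_exp.2 hexp) hc0
  -- pass to the limit ε → 0⁺
  have htend : Filter.Tendsto (fun ε : ℝ => (γ3 * η + 2 * α * ε) * Real.exp (C + ε))
      (nhdsWithin 0 (Ioi 0)) (nhds (γ3 * η * Real.exp C)) := by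
    have hcont : Continuous fun ε : ℝ => (γ3 * η + 2 * α * ε) * Real.exp (C + ε) :=
      (continuous_const.add (continuous_const.mul continuous_id)).mul
        (Real.continuous_exp.comp (continuous_const.add continuous_id))
    have := hcont.tendsto 0
    simp only [mul_zero, add_zero] at this
    exact this.mono_left nhdsWithin_le_nhds
  refine ge_of_tendsto htend ?_
  filter_upwards [self_mem_nhdsWithin] with ε hε
  exact hmain ε hε
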